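/- Let P be a partial order on {1,2,…,m} whose dual poset P̄ is naturally labeled, and let a_1 ≤ ⋯ ≤ a_m be the increasing rearrangement of m̄c(1),…,m̄c(m). Let N_P(q,x) be the numerator of the q-Ehrhart polynomial E_P of the order polytope of P, and let φ(q) ∈ ℤ[q] be the polynomial with F_{P̄}(q,x) = N_P(q,x)·φ(q), and set r = deg φ. Then NT(N_P(q,x)) = C(a_1,…,a_m;h) for some integer h ≥ a_1+⋯+a_m if and only if NT(F_{P̄}(q,x)) = C(a_1,…,a_m;h′) for some integer h′ ≥ a_1+⋯+a_m; moreover, in this case h′ = h + r. -/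

import Mathlib

open Finset Polynomial LaurentPolynomial

attribute [local instance] Classical.propDecidable

/-- The value `π_i` of the word of `π` at the 1-based position `i` (values in `{1, …, m}`). -/
def wordAt (m : ℕ) (π : Equiv.Perm (Fin m)) (i : ℕ) : ℕ :=
  if h : i - 1 < m then ((π ⟨i - 1, h⟩ : Fin m) : ℕ) + 1 else 0

/-- The descent set `Des(π) ⊆ {1, …, m-1}` (1-based positions). -/
def DesSet (m : ℕ) (π : Equiv.Perm (Fin m)) : Finset ℕ :=
  (Finset.Ico 1 m).filter fun i => wordAt m π (i + 1) < wordAt m π i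

/-- The number of descents `des(π)`. -/
def desNum (m : ℕ) (π : Equiv.Perm (Fin m)) : ℕ := (DesSet m π).card

/-- The major index `maj(π)`. -/
def majIdx (m : ℕ) (π : Equiv.Perm (Fin m)) : ℕ := ∑ i ∈ DesSet m π, i

/-- The partial order `P` on `{1,…,m}` (encoded as `Fin m`) is naturally labeled:
`x ≤_P y` implies `x ≤ y` as integers. -/
def NatLabeled (m : ℕ) (P : PartialOrder (Fin m)) : Prop :=
  ∀ x y : Fin m, P.le x y → x ≤ y

/-- `π` is a linear extension of `P`: `π_i ≤_P π_j` implies `i ≤ j`. -/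
def IsLinExt (m : ℕ) (P : PartialOrder (Fin m)) (π : Equiv.Perm (Fin m)) : Prop :=
  ∀ i j : Fin m, P.le (π i) (π j) → i ≤ j

/-- `mc(x)`: the maximum number of elements of a chain of `P` whose largest element is `x`. -/
noncomputable def mc (m : ℕ) (P : PartialOrder (Fin m)) (x : Fin m) : ℕ :=
  sSup {k : ℕ | ∃ s : Finset (Fin m),
    s.card = k ∧ IsChain P.le ↑s ∧ x ∈ s ∧ ∀ y ∈ s, P.le y x}

/-- `m̄c(x)`: the maximum number of elements of a chain of `P` whose smallest element is `x`. -/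
noncomputable def mcUp (m : ℕ) (P : PartialOrder (Fin m)) (x : Fin m) : ℕ :=
  sSup {k : ℕ | ∃ s : Finset (Fin m),
    s.card = k ∧ IsChain P.le ↑s ∧ x ∈ s ∧ ∀ y ∈ s, P.le x y}

/-- The `q`-integer `[n]_q` for `n ∈ ℤ`, as a Laurent polynomial:
`[n]_q = 1 + q + ⋯ + q^{n-1}` for `n ≥ 0` and `[-n]_q = -q^{-n} [n]_q`. -/
noncomputable def qInt (n : ℤ) : LaurentPolynomial ℤ :=
  if 0 ≤ n then ∑ i ∈ Finset.range n.toNat, T (i : ℤ)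
  else -(T n * ∑ i ∈ Finset.range (-n).toNat, T (i : ℤ))

/-- The polynomial `F_P(q,x) = Σ_{π ∈ L(P)} q^{maj π} Π_{i=1}^m ([i - des π]_q + q^{i - des π} x)`,
an element of `(ℤ[q,q⁻¹])[x]` (it in fact lies in `ℤ[q,x]`). -/
noncomputable def Fpoly (m : ℕ) (P : PartialOrder (Fin m)) : Polynomial (LaurentPolynomial ℤ) :=
  ∑ π ∈ Finset.univ.filter (fun π => IsLinExt m P π),
    Polynomial.C (T (majIdx m π : ℤ)) *
      ∏ i ∈ Finset.Icc 1 m,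
        (Polynomial.C (qInt ((i : ℤ) - desNum m π)) +
          Polynomial.C (T ((i : ℤ) - desNum m π)) * Polynomial.X)

/-- The Newton polygon of an element of `(ℤ[q,q⁻¹])[x]`, in the `(q,x)`-plane. -/
noncomputable def NTL (f : Polynomial (LaurentPolynomial ℤ)) : Set (ℝ × ℝ) :=
  convexHull ℝ {p : ℝ × ℝ | ∃ (i : ℤ) (k : ℕ), (f.coeff k).coeff i ≠ 0 ∧ p = ((i : ℝ), (k : ℝ))}

/-- The Newton polygon of an element of `ℤ[q][x]`, in the `(q,x)`-plane. -/
noncomputable def NTP (f : Polynomial (Polynomial ℤ)) : Set (ℝ × ℝ) :=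
  convexHull ℝ {p : ℝ × ℝ | ∃ (i k : ℕ), (f.coeff k).coeff i ≠ 0 ∧ p = ((i : ℝ), (k : ℝ))}

/-- The polygon `C(a_1,…,a_m;h)`: the convex hull of `(0,0)`, `(a_1+⋯+a_i, i)` for
`1 ≤ i ≤ m`, `(h,m)` and `(h-m,0)`. -/
noncomputable def Cpolygon (m : ℕ) (a : ℕ → ℕ) (h : ℕ) : Set (ℝ × ℝ) :=
  convexHull ℝ ({((0 : ℝ), (0 : ℝ)), ((h : ℝ), (m : ℝ)), ((h : ℝ) - (m : ℝ), (0 : ℝ))} ∪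
    {p : ℝ × ℝ | ∃ i ∈ Finset.Icc 1 m, p = ((∑ j ∈ Finset.Icc 1 i, (a j : ℝ)), (i : ℝ))})

/-- The index of the descent block of `π` containing the 1-based position `j`. -/
def blockIdx (m : ℕ) (π : Equiv.Perm (Fin m)) (j : ℕ) : ℕ :=
  1 + ((Finset.Ico 1 j).filter (fun i => i ∉ DesSet m π)).card

/-- `DB_i(π)`: the set of entries of the `i`-th descent block of `π`. -/
def DB (m : ℕ) (π : Equiv.Perm (Fin m)) (i : ℕ) : Finset (Fin m) :=
  Finset.univ.filter fun x => blockIdx m π (((π.symm x : Fin m) : ℕ) + 1) = i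

/-- `PP(P,n)`: the set of `P`-partitions (order-reversing maps) with all parts at most `n`,
encoded as functions `Fin m → Fin (n+1)`. -/
noncomputable def PPset (m : ℕ) (P : PartialOrder (Fin m)) (n : ℕ) :
    Finset (Fin m → Fin (n + 1)) :=
  Finset.univ.filter fun σ => ∀ x y : Fin m, P.le x y → σ y ≤ σ x

/-- `|σ| = σ(1) + ⋯ + σ(m)`. -/
def sizePP (m n : ℕ) (σ : Fin m → Fin (n + 1)) : ℕ := ∑ i : Fin m, (σ i : ℕ)

/-- The `q`-integer `[n]_q` for `n ∈ ℕ`, as an ordinary polynomial in `q`. -/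
noncomputable def qIntP (n : ℕ) : Polynomial ℤ := ∑ i ∈ Finset.range n, Polynomial.X ^ i

/-- The `q`-factorial `[n]_q!`. -/
noncomputable def qFact (n : ℕ) : Polynomial ℤ := ∏ i ∈ Finset.Icc 1 n, qIntP i

/-- The dual poset `P̄` : `x ≤_{P̄} y` iff `y ≤_P x`. -/
def dualP (m : ℕ) (P : PartialOrder (Fin m)) : PartialOrder (Fin m) where
  le x y := P.le y x
  lt x y := P.lt y x
  le_refl x := P.le_refl x
  le_trans a b c h1 h2 := P.le_trans c b a h2 h1
  le_antisymm a b h1 h2 := P.le_antisymm a b h2 h1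
  lt_iff_le_not_ge a b := P.lt_iff_le_not_ge b a

/-- The canonical ring map `ℤ[q] → ℚ(q)`. -/
noncomputable def toRF : Polynomial ℤ →+* RatFunc ℚ :=
  (algebraMap (Polynomial ℚ) (RatFunc ℚ)).comp (Polynomial.mapRingHom (Int.castRingHom ℚ))

/-- `W(n·O(P), q) = Σ_σ q^{|σ|}`, the sum being over all order-preserving maps
`σ : P → {0,…,n}`. -/
noncomputable def Wpoly (m : ℕ) (P : PartialOrder (Fin m)) (n : ℕ) : Polynomial ℤ :=
  ∑ σ ∈ (Finset.univ.filter fun σ : Fin m → Fin (n + 1) =>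
      ∀ x y : Fin m, P.le x y → σ x ≤ σ y),
    Polynomial.X ^ (∑ i : Fin m, (σ i : ℕ))

/-- The polynomial `q^{mj - s(s-1)/2} Π_{i=1}^{s-1} (x - [i]_q) Π_{i=1}^{m-s} (q^i x + [i]_q)`. -/
noncomputable def tSummand (m s mj : ℕ) : Polynomial (LaurentPolynomial ℤ) :=
  Polynomial.C (T ((mj : ℤ) - (s * (s - 1) / 2 : ℕ))) *
    (∏ i ∈ Finset.Icc 1 (s - 1), (Polynomial.X - Polynomial.C (qInt (i : ℤ)))) *
    ∏ i ∈ Finset.Icc 1 (m - s),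
      (Polynomial.C (T (i : ℤ)) * Polynomial.X + Polynomial.C (qInt (i : ℤ)))

/-- `t(π,k)`: the coefficient of `x^{k-1}` in
`q^{maj π - s(s-1)/2} Π_{i=1}^{s-1} (x - [i]_q) Π_{i=1}^{m-s} (q^i x + [i]_q)`,
where `s = des π`. -/
noncomputable def tpoly (m : ℕ) (π : Equiv.Perm (Fin m)) (k : ℕ) : LaurentPolynomial ℤ :=
  (tSummand m (desNum m π) (majIdx m π)).coeff (k - 1)

/-- The polynomial `A(q,x) = Π_{i=1}^m (q^i x + [i]_q)`. -/
noncomputable def Apoly (m : ℕ) : Polynomial (LaurentPolynomial ℤ) :=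
  ∏ i ∈ Finset.Icc 1 m,
    (Polynomial.C (T (i : ℤ)) * Polynomial.X + Polynomial.C (qInt (i : ℤ)))

/-- The polynomial `B(q,x) = x Σ_{π ∈ L(P), des π ≥ 1} q^{maj π - s(s-1)/2}
Π_{i=1}^{s-1} (x - [i]_q) Π_{i=1}^{m-s} (q^i x + [i]_q)`, where `s = des π`;
one has `F_P(q,x) = A(q,x) + B(q,x)`. -/
noncomputable def Bpoly (m : ℕ) (P : PartialOrder (Fin m)) : Polynomial (LaurentPolynomial ℤ) :=
  Polynomial.X *
    ∑ π ∈ Finset.univ.filter (fun π => IsLinExt m P π ∧ 1 ≤ desNum m π),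
      tSummand m (desNum m π) (majIdx m π)

open Pointwise

section Aux

-- horizontal segment membership
lemma mem_hull_of_between {X : Set (ℝ×ℝ)} {x₁ x₂ x y : ℝ}
    (hA : (x₁,y) ∈ convexHull ℝ X) (hB : (x₂,y) ∈ convexHull ℝ X)
    (h1 : x₁ ≤ x) (h2 : x ≤ x₂) : (x,y) ∈ convexHull ℝ X := by
  have hx : x ∈ segment ℝ x₁ x₂ := by
    rw [segment_eq_Icc (h1.trans h2)]; exact ⟨h1, h2⟩
  obtain ⟨a, b, ha, hb, hab, hx⟩ := hx
  have h' : a • ((x₁:ℝ),y) + b • ((x₂:ℝ),y) = (x,y) := by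
    simp only [Prod.smul_mk, smul_eq_mul, Prod.mk_add_mk, Prod.mk.injEq]
    constructor
    · simpa [smul_eq_mul] using hx
    · linear_combination y * hab
  rw [← h']; exact (convex_convexHull ℝ X) hA hB ha hb hab

lemma toLaurent_coeff_nat (p : Polynomial ℤ) (n : ℕ) :
    (Polynomial.toLaurent p).coeff (n : ℤ) = p.coeff n := by
  rw [coeff_toLaurent]
  exact Finsupp.mapDomain_apply Nat.castEmbedding.injective _ _

lemma toLaurent_coeff_neg (p : Polynomial ℤ) (n : ℤ) (hn : n < 0) :
    (Polynomial.toLaurent p).coeff n = 0 := by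
  rw [coeff_toLaurent]
  apply Finsupp.mapDomain_notin_range
  rintro ⟨k, rfl⟩
  change ((k : ℕ) : ℤ) < 0 at hn
  omega

-- identity permutation facts
lemma wordAt_one (m : ℕ) {i : ℕ} (h1 : 1 ≤ i) (h2 : i ≤ m) : wordAt m 1 i = i := by
  have h : i - 1 < m := by omega
  rw [wordAt, dif_pos h]
  simp only [Equiv.Perm.coe_one, id_eq]
  omega

lemma desSet_one (m : ℕ) : DesSet m 1 = ∅ := by
  rw [DesSet, Finset.filter_eq_empty_iff]
  intro i hi
  rw [Finset.mem_Ico] at hi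
  rw [wordAt_one m (by omega) (by omega), wordAt_one m (by omega) (by omega)]
  omega

lemma desNum_one (m : ℕ) : desNum m 1 = 0 := by rw [desNum, desSet_one]; rfl

lemma majIdx_one (m : ℕ) : majIdx m 1 = 0 := by rw [majIdx, desSet_one]; rfl

lemma eq_one_of_desNum_eq_zero {m : ℕ} {π : Equiv.Perm (Fin m)}
    (h : desNum m π = 0) : π = 1 := by
  have hD : DesSet m π = ∅ := Finset.card_eq_zero.mp h
  have hmono : ∀ j : ℕ, (hj : j + 1 < m) → π ⟨j, by omega⟩ < π ⟨j+1, hj⟩ := by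
    intro j hj
    have hi : j + 1 ∈ DesSet m π ↔ False := by rw [hD]; simp
    rw [DesSet, Finset.mem_filter, Finset.mem_Ico] at hi
    have hle : ¬ (wordAt m π (j + 2) < wordAt m π (j+1)) := by
      intro hcon; exact (hi.mp ⟨⟨by omega, by omega⟩, hcon⟩).elim
    have e1 : wordAt m π (j+1) = (π ⟨j, by omega⟩ : ℕ) + 1 := by
      rw [wordAt, dif_pos (by omega : j + 1 - 1 < m)]
      simp
    have e2 : wordAt m π (j+2) = (π ⟨j+1, hj⟩ : ℕ) + 1 := by
      rw [wordAt, dif_pos (by omega : j + 2 - 1 < m)]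
      simp
    have hne : π ⟨j, by omega⟩ ≠ π ⟨j+1, hj⟩ := by
      intro hcon
      have := π.injective hcon
      simp only [Fin.mk.injEq] at this
      omega
    rw [e1, e2] at hle
    rcases lt_or_eq_of_le (by omega : (π ⟨j, by omega⟩ : ℕ) ≤ (π ⟨j+1, hj⟩ : ℕ)) with h' | h'
    · exact h'
    · exact absurd (Fin.ext h') hne
  cases m with
  | zero => exact Subsingleton.elim _ _
  | succ n =>
    have hsm : StrictMono (⇑π) := by
      rw [Fin.strictMono_iff_lt_succ]
      intro i
      have := hmono i.val (by omega)
      convert this using 2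
      · rfl
      all_goals simp [Fin.ext_iff, Fin.castSucc, Fin.succ]
    haveI : WellFoundedLT (Fin (n+1)) := Finite.to_wellFoundedLT
    have hid : ⇑π = id := by
      apply (hsm.range_inj strictMono_id).1
      simp [Set.range_eq_univ.mpr π.surjective]
    ext x
    rw [show π x = x from congrFun hid x]
    simp

lemma one_isLinExt {m : ℕ} {Q : PartialOrder (Fin m)} (hQ : NatLabeled m Q) :
    IsLinExt m Q 1 := by
  intro i j hij
  exact hQ i j (by simpa using hij)

lemma qInt_natCast_eq (i : ℕ) : qInt (i : ℤ) = Polynomial.toLaurent (qIntP i) := by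
  rw [qInt, if_pos (by positivity), qIntP]
  rw [map_sum]
  simp [Polynomial.toLaurent_X_pow]

lemma desNum_le {m : ℕ} (π : Equiv.Perm (Fin m)) : desNum m π ≤ m := by
  have := Finset.card_filter_le (Finset.Ico 1 m) (fun i => wordAt m π (i + 1) < wordAt m π i)
  rw [desNum, DesSet]
  simp only [Nat.card_Ico] at this ⊢
  omega

lemma Fpoly_coeff_zero {m : ℕ} {Q : PartialOrder (Fin m)} (hQ : NatLabeled m Q) :
    (Fpoly m Q).coeff 0 = Polynomial.toLaurent (qFact m) := by
  rw [Polynomial.coeff_zero_eq_eval_zero, Fpoly, Polynomial.eval_finset_sum]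
  have hterm : ∀ π : Equiv.Perm (Fin m),
      (Polynomial.C ((T (majIdx m π : ℤ)) : LaurentPolynomial ℤ) *
        ∏ i ∈ Finset.Icc 1 m,
          (Polynomial.C (qInt ((i : ℤ) - desNum m π)) +
            Polynomial.C (T ((i : ℤ) - desNum m π)) * Polynomial.X)).eval 0
      = ((T (majIdx m π : ℤ)) : LaurentPolynomial ℤ) * ∏ i ∈ Finset.Icc 1 m, qInt ((i : ℤ) - desNum m π) := by
    intro π
    rw [Polynomial.eval_mul, Polynomial.eval_C, Polynomial.eval_prod]
    congr 1
    apply Finset.prod_congr rfl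
    intro i _
    simp
  rw [Finset.sum_congr rfl (fun π _ => hterm π)]
  rw [Finset.sum_eq_single (1 : Equiv.Perm (Fin m))]
  · rw [majIdx_one, desNum_one]
    simp only [Nat.cast_zero, T_zero, one_mul]
    rw [qFact, map_prod]
    apply Finset.prod_congr rfl
    intro i _
    rw [← qInt_natCast_eq]
    norm_num
  · intro b hb hb1
    have hdes : desNum m b ≠ 0 := fun hc => hb1 (eq_one_of_desNum_eq_zero hc)
    have hmem : desNum m b ∈ Finset.Icc 1 m := by
      rw [Finset.mem_Icc]; exact ⟨by omega, desNum_le b⟩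
    have hz : qInt ((desNum m b : ℤ) - desNum m b) = 0 := by
      rw [sub_self, qInt, if_pos le_rfl]; simp
    rw [Finset.prod_eq_zero hmem hz, mul_zero]
  · intro hc
    exact absurd (Finset.mem_filter.mpr ⟨Finset.mem_univ _, one_isLinExt hQ⟩) hc

end Aux

section Radstrom

lemma radstrom_subset {E : Type*} [NormedAddCommGroup E] [NormedSpace ℝ E]
    {A B S : Set E} (hB : Convex ℝ B) (hBc : IsClosed B) (hS : S.Nonempty)
    (hSb : Bornology.IsBounded S) (h : A + S ⊆ B + S) : A ⊆ B := by
  obtain ⟨M, hM⟩ := isBounded_iff_forall_norm_le.mp hSb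
  obtain ⟨s₀, hs₀⟩ := hS
  intro x hx
  have key : ∀ s ∈ S, ∃ b ∈ B, ∃ s' ∈ S, x + s = b + s' := by
    intro s hs
    obtain ⟨b, hb, s', hs', he⟩ := h (Set.add_mem_add hx hs)
    exact ⟨b, hb, s', hs', he.symm⟩
  choose! bf hbf sf hsf heq using key
  classical
  let seq : ℕ → E := fun n => Nat.rec s₀ (fun _ s => sf s) n
  have hseqS : ∀ n, seq n ∈ S := by
    intro n; induction n with
    | zero => exact hs₀
    | succ n ih => exact hsf _ ih
  have hrel : ∀ n, x + seq n = bf (seq n) + seq (n+1) := fun n => heq _ (hseqS n)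
  have hsum : ∀ n : ℕ, (n : ℝ) • x + seq 0 =
      (∑ k ∈ Finset.range n, bf (seq k)) + seq n := by
    intro n; induction n with
    | zero => simp
    | succ n ih =>
      rw [Finset.sum_range_succ]
      have : ((n+1 : ℕ) : ℝ) • x = (n : ℝ) • x + x := by
        push_cast; rw [add_smul, one_smul]
      rw [this]
      calc (n : ℝ) • x + x + seq 0
          = ((n : ℝ) • x + seq 0) + x := by abel
        _ = ((∑ k ∈ Finset.range n, bf (seq k)) + seq n) + x := by rw [ih]
        _ = (∑ k ∈ Finset.range n, bf (seq k)) + (x + seq n) := by abel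
        _ = (∑ k ∈ Finset.range n, bf (seq k)) + (bf (seq n) + seq (n+1)) := by rw [hrel n]
        _ = (∑ k ∈ Finset.range n, bf (seq k)) + bf (seq n) + seq (n + 1) := by abel
  set c : ℕ → E := fun n => (n : ℝ)⁻¹ • ∑ k ∈ Finset.range n, bf (seq k) with hc
  have hcB : ∀ n : ℕ, 1 ≤ n → c n ∈ B := by
    intro n hn
    have hn' : (0:ℝ) < n := by exact_mod_cast hn
    have := hB.sum_mem (t := Finset.range n) (w := fun _ => (n:ℝ)⁻¹)
      (fun i _ => by positivity)
      (by rw [Finset.sum_const, Finset.card_range, nsmul_eq_mul]; field_simp)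
      (fun i _ => hbf _ (hseqS i))
    simpa [hc, Finset.smul_sum] using this
  have hcx : ∀ n : ℕ, 1 ≤ n → c n - x = (n : ℝ)⁻¹ • (seq 0 - seq n) := by
    intro n hn
    have hn' : ((n:ℝ)) ≠ 0 := by positivity
    have hs := hsum n
    have : (∑ k ∈ Finset.range n, bf (seq k)) = (n : ℝ) • x + seq 0 - seq n := by
      rw [hs]; abel
    rw [hc]; simp only [this, smul_sub, smul_add]
    rw [inv_smul_smul₀ hn']
    abel
  have hnorm : ∀ n : ℕ, 1 ≤ n → ‖c n - x‖ ≤ (2*M)/n := by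
    intro n hn
    rw [hcx n hn, norm_smul]
    have h1 : ‖seq 0 - seq n‖ ≤ 2*M := by
      calc ‖seq 0 - seq n‖ ≤ ‖seq 0‖ + ‖seq n‖ := norm_sub_le _ _
        _ ≤ M + M := add_le_add (hM _ (hseqS 0)) (hM _ (hseqS n))
        _ = 2*M := by ring
    have hn' : (0:ℝ) < n := by exact_mod_cast hn
    rw [div_eq_inv_mul]
    have : ‖((n:ℝ))⁻¹‖ = (n:ℝ)⁻¹ := by
      rw [Real.norm_eq_abs, abs_of_pos (by positivity)]
    rw [this]
    exact mul_le_mul_of_nonneg_left h1 (by positivity)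
  have htend0 : Filter.Tendsto (fun n => c n - x) Filter.atTop (nhds 0) := by
    apply squeeze_zero_norm' _ (tendsto_const_div_atTop_nhds_zero_nat (2*M))
    filter_upwards [Filter.eventually_ge_atTop 1] with n hn using hnorm n hn
  have htend : Filter.Tendsto c Filter.atTop (nhds x) :=
    tendsto_sub_nhds_zero_iff.mp htend0
  exact hBc.mem_of_tendsto htend
    (by filter_upwards [Filter.eventually_ge_atTop 1] with n hn using hcB n hn)

lemma radstrom_cancel {E : Type*} [NormedAddCommGroup E] [NormedSpace ℝ E]
    {A B S : Set E} (hA : Convex ℝ A) (hAc : IsClosed A)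
    (hB : Convex ℝ B) (hBc : IsClosed B) (hS : S.Nonempty)
    (hSb : Bornology.IsBounded S) (h : A + S = B + S) : A = B :=
  Set.Subset.antisymm (radstrom_subset hB hBc hS hSb h.le)
    (radstrom_subset hA hAc hS hSb h.ge)

end Radstrom

section NTProd

lemma coeff_map_mul_C (N : Polynomial (Polynomial ℤ)) (φ : Polynomial ℤ) (k : ℕ) :
    (N.map Polynomial.toLaurent * Polynomial.C (Polynomial.toLaurent φ)).coeff k =
      Polynomial.toLaurent (N.coeff k * φ) := by
  rw [Polynomial.coeff_mul_C, Polynomial.coeff_map, ← map_mul]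

lemma NTL_eq_NTP_add_seg {N : Polynomial (Polynomial ℤ)} {φ : Polynomial ℤ}
    (hN : N ≠ 0) (hφ0 : φ.coeff 0 ≠ 0) :
    NTL (N.map Polynomial.toLaurent * Polynomial.C (Polynomial.toLaurent φ)) =
      NTP N + convexHull ℝ {((0:ℝ),(0:ℝ)), ((φ.natDegree : ℝ), 0)} := by
  have hφ : φ ≠ 0 := fun h => hφ0 (by simp [h])
  have hvφ : φ.natTrailingDegree = 0 :=
    Nat.le_zero.mp (Polynomial.natTrailingDegree_le_of_ne_zero hφ0)
  rw [NTP, NTL, ← convexHull_add]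
  apply Set.Subset.antisymm
  · apply convexHull_min _ (convex_convexHull ℝ _)
    rintro p ⟨i, k, hne, rfl⟩
    rw [coeff_map_mul_C] at hne
    have hi0 : 0 ≤ i := by
      by_contra hc
      exact hne (toLaurent_coeff_neg _ _ (by omega))
    obtain ⟨n, rfl⟩ : ∃ n : ℕ, i = (n : ℤ) := ⟨i.toNat, by omega⟩
    rw [toLaurent_coeff_nat] at hne
    set p := N.coeff k with hp
    have hpne : p ≠ 0 := by
      intro h; rw [h, zero_mul] at hne; simp at hne
    have hmul : p * φ ≠ 0 := mul_ne_zero hpne hφ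
    have hlow : p.natTrailingDegree ≤ n := by
      have := Polynomial.natTrailingDegree_le_of_ne_zero hne
      rwa [Polynomial.natTrailingDegree_mul hpne hφ, hvφ, add_zero] at this
    have hhigh : n ≤ p.natDegree + φ.natDegree := by
      have := Polynomial.le_natDegree_of_ne_zero hne
      rwa [Polynomial.natDegree_mul hpne hφ] at this
    have hAmem : ((p.natTrailingDegree : ℝ), (k:ℝ)) ∈
        convexHull ℝ ({q : ℝ × ℝ | ∃ i k, (N.coeff k).coeff i ≠ 0 ∧ q = ((i:ℝ),(k:ℝ))} +
          {((0:ℝ),(0:ℝ)), ((φ.natDegree : ℝ), 0)}) := by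
      apply subset_convexHull
      refine Set.mem_add.mpr ⟨((p.natTrailingDegree : ℝ), (k:ℝ)),
        ⟨p.natTrailingDegree, k, mt Polynomial.trailingCoeff_eq_zero.mp hpne, rfl⟩, ((0:ℝ),(0:ℝ)), Set.mem_insert _ _, by simp⟩
    have hBmem : (((p.natDegree : ℝ) + (φ.natDegree : ℝ)), (k:ℝ)) ∈
        convexHull ℝ ({q : ℝ × ℝ | ∃ i k, (N.coeff k).coeff i ≠ 0 ∧ q = ((i:ℝ),(k:ℝ))} +
          {((0:ℝ),(0:ℝ)), ((φ.natDegree : ℝ), 0)}) := by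
      apply subset_convexHull
      refine Set.mem_add.mpr ⟨((p.natDegree : ℝ), (k:ℝ)),
        ⟨p.natDegree, k, Polynomial.leadingCoeff_ne_zero.mpr hpne, rfl⟩, ((φ.natDegree : ℝ),(0:ℝ)), Set.mem_insert_iff.mpr (Or.inr rfl), by simp⟩
    push_cast
    exact mem_hull_of_between hAmem hBmem (by exact_mod_cast hlow) (by push_cast; exact_mod_cast hhigh)
  · apply convexHull_min _ (convex_convexHull ℝ _)
    rintro q ⟨u, hu, v, hv, rfl⟩
    obtain ⟨i, k, hne, rfl⟩ := hu
    set p := N.coeff k with hp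
    have hpne : p ≠ 0 := fun h => hne (by rw [h]; simp)
    have hmul : p * φ ≠ 0 := mul_ne_zero hpne hφ
    have hAmem : ((p.natTrailingDegree : ℝ), (k:ℝ)) ∈
        convexHull ℝ {q : ℝ × ℝ | ∃ (i : ℤ) (k : ℕ),
          ((N.map Polynomial.toLaurent * Polynomial.C (Polynomial.toLaurent φ)).coeff k).coeff i ≠ 0 ∧
            q = ((i:ℝ),(k:ℝ))} := by
      apply subset_convexHull
      refine ⟨(p.natTrailingDegree : ℤ), k, ?_, by push_cast; rfl⟩
      rw [coeff_map_mul_C, toLaurent_coeff_nat]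
      have : (p * φ).natTrailingDegree = p.natTrailingDegree := by
        rw [Polynomial.natTrailingDegree_mul hpne hφ, hvφ, add_zero]
      rw [← this]
      exact mt Polynomial.trailingCoeff_eq_zero.mp hmul
    have hBmem : (((p.natDegree : ℝ) + (φ.natDegree : ℝ)), (k:ℝ)) ∈
        convexHull ℝ {q : ℝ × ℝ | ∃ (i : ℤ) (k : ℕ),
          ((N.map Polynomial.toLaurent * Polynomial.C (Polynomial.toLaurent φ)).coeff k).coeff i ≠ 0 ∧
            q = ((i:ℝ),(k:ℝ))} := by
      apply subset_convexHull
      refine ⟨((p.natDegree + φ.natDegree : ℕ) : ℤ), k, ?_, by push_cast; rfl⟩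
      rw [coeff_map_mul_C, toLaurent_coeff_nat]
      have : (p * φ).natDegree = p.natDegree + φ.natDegree :=
        Polynomial.natDegree_mul hpne hφ
      rw [← this]
      exact Polynomial.leadingCoeff_ne_zero.mpr hmul
    have hv' : v = ((0:ℝ),(0:ℝ)) ∨ v = ((φ.natDegree : ℝ), 0) := hv
    have hilow : p.natTrailingDegree ≤ i := Polynomial.natTrailingDegree_le_of_ne_zero hne
    have hihigh : i ≤ p.natDegree := Polynomial.le_natDegree_of_ne_zero hne
    have hilow' : (p.natTrailingDegree : ℝ) ≤ (i:ℝ) := by exact_mod_cast hilow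
    have hihigh' : (i:ℝ) ≤ (p.natDegree : ℝ) := by exact_mod_cast hihigh
    have hdnn : (0:ℝ) ≤ (φ.natDegree : ℝ) := by positivity
    rcases hv' with rfl | rfl
    · simpa using mem_hull_of_between hAmem hBmem hilow' (by linarith)
    · simpa [Prod.mk_add_mk] using mem_hull_of_between hAmem hBmem (by linarith) (by linarith)

end NTProd

section Geometry

lemma mem_hull_comb {X : Set (ℝ×ℝ)} {A B : ℝ×ℝ} (hA : A ∈ convexHull ℝ X)
    (hB : B ∈ convexHull ℝ X) {t : ℝ} (h0 : 0 ≤ t) (h1 : t ≤ 1) :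
    (1-t) • A + t • B ∈ convexHull ℝ X :=
  (convex_convexHull ℝ X) hA hB (by linarith) h0 (by ring)

lemma lin1 (c : ℝ) : IsLinearMap ℝ (fun w : ℝ×ℝ => w.1 + c * w.2) := by
  constructor
  · intro x y; simp [Prod.fst_add, Prod.snd_add]; ring
  · intro t x; simp [Prod.smul_fst, Prod.smul_snd, smul_eq_mul]; ring

lemma lin2 (c : ℝ) : IsLinearMap ℝ (fun w : ℝ×ℝ => c * w.2 - w.1) := by
  constructor
  · intro x y; simp [Prod.fst_add, Prod.snd_add]; ring
  · intro t x; simp [Prod.smul_fst, Prod.smul_snd, smul_eq_mul]; ring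

lemma sum_icc_le_sum_icc {a : ℕ → ℕ} {i m : ℕ} (h : i ≤ m) :
    (∑ j ∈ Finset.Icc 1 i, (a j : ℝ)) ≤ ∑ j ∈ Finset.Icc 1 m, (a j : ℝ) := by
  apply Finset.sum_le_sum_of_subset_of_nonneg
  · exact Finset.Icc_subset_Icc le_rfl h
  · intro j _ _; positivity

lemma sum_split_nat (a : ℕ → ℕ) {i m : ℕ} (h : i ≤ m) :
    ∑ j ∈ Finset.Icc 1 m, a j =
      (∑ j ∈ Finset.Icc 1 i, a j) + ∑ j ∈ Finset.Ioc i m, a j := by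
  rw [show (1:ℕ) = 0 + 1 from rfl, Finset.Icc_add_one_left_eq_Ioc, Finset.Icc_add_one_left_eq_Ioc]
  exact (Finset.sum_Ioc_consecutive _ (Nat.zero_le i) h).symm

lemma sum_Ioc_ge {a : ℕ → ℕ} {i m : ℕ} (ha1 : ∀ j ∈ Finset.Icc 1 m, 1 ≤ a j)
    (h0 : 1 ≤ i) (h : i ≤ m) : m - i ≤ ∑ j ∈ Finset.Ioc i m, a j := by
  have := Finset.card_nsmul_le_sum (Finset.Ioc i m) a 1
    (fun x hx => by
      rw [Finset.mem_Ioc] at hx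
      exact ha1 x (Finset.mem_Icc.mpr ⟨by omega, hx.2⟩))
  rwa [Nat.card_Ioc, smul_eq_mul, mul_one] at this

lemma sum_Ioc_le {a : ℕ → ℕ} {i m : ℕ}
    (hmono : ∀ i ∈ Finset.Icc 1 m, ∀ j ∈ Finset.Icc 1 m, i ≤ j → a i ≤ a j)
    (h0 : 1 ≤ i) (h : i ≤ m) :
    ∑ j ∈ Finset.Ioc i m, a j ≤ (m - i) * a m := by
  have := Finset.sum_le_card_nsmul (Finset.Ioc i m) a (a m)
    (fun x hx => by
      rw [Finset.mem_Ioc] at hx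
      exact hmono x (Finset.mem_Icc.mpr ⟨by omega, hx.2⟩) m
        (Finset.mem_Icc.mpr ⟨by omega, le_rfl⟩) hx.2)
  rwa [Nat.card_Ioc, smul_eq_mul] at this

lemma sum_ge_card {a : ℕ → ℕ} {m : ℕ} (ha1 : ∀ j ∈ Finset.Icc 1 m, 1 ≤ a j) :
    m ≤ ∑ j ∈ Finset.Icc 1 m, a j := by
  have := Finset.card_nsmul_le_sum (Finset.Icc 1 m) a 1 (fun x hx => ha1 x hx)
  rwa [Nat.card_Icc, smul_eq_mul, mul_one, Nat.add_sub_cancel] at this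

lemma Cpolygon_le {m : ℕ} {a : ℕ → ℕ} {h : ℕ}
    (hha : (∑ j ∈ Finset.Icc 1 m, (a j : ℝ)) ≤ (h:ℝ)) :
    ∀ p ∈ Cpolygon m a h, p.1 + (h:ℝ) * p.2 ≤ (h:ℝ) * (1 + m) := by
  intro p hp
  refine convexHull_min ?_ (convex_halfSpace_le (lin1 (h:ℝ)) ((h:ℝ)*(1+m))) hp
  have hh0 : (0:ℝ) ≤ h := by positivity
  have hm0 : (0:ℝ) ≤ m := by positivity
  rintro q ((rfl | rfl | rfl) | ⟨i, hi, rfl⟩) <;>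
    simp only [Set.mem_setOf_eq]
  · nlinarith
  · nlinarith
  · nlinarith
  · rw [Finset.mem_Icc] at hi
    have him : (i:ℝ) ≤ m := by exact_mod_cast hi.2
    have hsi : (∑ j ∈ Finset.Icc 1 i, (a j:ℝ)) ≤ (h:ℝ) :=
      le_trans (sum_icc_le_sum_icc hi.2) hha
    nlinarith

lemma Cpolygon_ge {m : ℕ} {a : ℕ → ℕ} {h : ℕ} (hm : 1 ≤ m)
    (ha1 : ∀ j ∈ Finset.Icc 1 m, 1 ≤ a j)
    (hmono : ∀ i ∈ Finset.Icc 1 m, ∀ j ∈ Finset.Icc 1 m, i ≤ j → a i ≤ a j)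
    (hha : (∑ j ∈ Finset.Icc 1 m, a j) ≤ h) :
    ∀ p ∈ Cpolygon m a h,
      (a m : ℝ) * p.2 - p.1 ≤ (a m : ℝ) * m - ∑ j ∈ Finset.Icc 1 m, (a j:ℝ) := by
  intro p hp
  refine convexHull_min ?_ (convex_halfSpace_le (lin2 ((a m):ℝ)) _) hp
  have hc : ((∑ j ∈ Finset.Icc 1 m, a j : ℕ) : ℝ) = ∑ j ∈ Finset.Icc 1 m, (a j:ℝ) := by
    push_cast; rfl
  have hsm_h : (∑ j ∈ Finset.Icc 1 m, (a j:ℝ)) ≤ (h:ℝ) := by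
    rw [← hc]; exact_mod_cast hha
  have hm1 : (1:ℝ) ≤ (a m : ℝ) := by
    exact_mod_cast ha1 m (Finset.mem_Icc.mpr ⟨hm, le_rfl⟩)
  have hm' : (1:ℝ) ≤ (m:ℝ) := by exact_mod_cast hm
  have hsm_le : (∑ j ∈ Finset.Icc 1 m, (a j:ℝ)) ≤ (m:ℝ) * (a m : ℝ) := by
    have h3 : (∑ j ∈ Finset.Icc 1 m, a j) ≤ m * a m := by
      have h4 := Finset.sum_le_card_nsmul (Finset.Icc 1 m) a (a m)
        (fun x hx => by
          rw [Finset.mem_Icc] at hx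
          exact hmono x (Finset.mem_Icc.mpr hx) m (Finset.mem_Icc.mpr ⟨hm, le_rfl⟩) hx.2)
      rwa [Nat.card_Icc, smul_eq_mul, Nat.add_sub_cancel] at h4
    rw [← hc]
    exact_mod_cast h3
  rintro q ((rfl | rfl | rfl) | ⟨i, hi, rfl⟩) <;>
    simp only [Set.mem_setOf_eq]
  · nlinarith
  · nlinarith
  · nlinarith
  · rw [Finset.mem_Icc] at hi
    have him : (i:ℝ) ≤ m := by exact_mod_cast hi.2
    have hkey : (∑ j ∈ Finset.Icc 1 m, (a j:ℝ)) - (∑ j ∈ Finset.Icc 1 i, (a j:ℝ)) ≤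
        (a m : ℝ) * ((m:ℝ) - (i:ℝ)) := by
      have h2 := sum_split_nat a hi.2
      have h3 := sum_Ioc_le hmono hi.1 hi.2
      have h4 : (∑ j ∈ Finset.Icc 1 m, a j) ≤ (∑ j ∈ Finset.Icc 1 i, a j) + (m - i) * a m := by
        omega
      have h5 : ((∑ j ∈ Finset.Icc 1 m, a j : ℕ):ℝ) ≤
          ((∑ j ∈ Finset.Icc 1 i, a j : ℕ):ℝ) + (((m - i) * a m : ℕ):ℝ) := by
        exact_mod_cast h4
      push_cast [Nat.cast_sub hi.2] at h5
      linarith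
    nlinarith
  
end Geometry

section CpolyAdd

lemma Cpolygon_add_seg {m : ℕ} {a : ℕ → ℕ} (hm : 1 ≤ m) {h : ℕ} (r : ℕ)
    (ha1 : ∀ j ∈ Finset.Icc 1 m, 1 ≤ a j)
    (hha : (∑ j ∈ Finset.Icc 1 m, a j) ≤ h) :
    Cpolygon m a h + convexHull ℝ {((0:ℝ),(0:ℝ)), ((r:ℝ),0)} = Cpolygon m a (h+r) := by
  have hmh : m ≤ h := le_trans (sum_ge_card ha1) hha
  have hmh' : (m:ℝ) ≤ (h:ℝ) := by exact_mod_cast hmh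
  have hm0 : (0:ℝ) < (m:ℝ) := by exact_mod_cast hm
  have hr0 : (0:ℝ) ≤ (r:ℝ) := by positivity
  have hsm : (∑ j ∈ Finset.Icc 1 m, (a j:ℝ)) ≤ (h:ℝ) := by
    have : ((∑ j ∈ Finset.Icc 1 m, a j : ℕ):ℝ) ≤ (h:ℝ) := by exact_mod_cast hha
    push_cast at this; exact this
  rw [Cpolygon, Cpolygon, ← convexHull_add]
  -- generator memberships of the target
  have g0 : ((0:ℝ),(0:ℝ)) ∈ convexHull ℝ
      (({((0:ℝ), (0:ℝ)), (((h+r:ℕ):ℝ), (m:ℝ)), (((h+r:ℕ):ℝ) - (m:ℝ), (0:ℝ))} : Set (ℝ×ℝ)) ∪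
        {p : ℝ × ℝ | ∃ i ∈ Finset.Icc 1 m, p = ((∑ j ∈ Finset.Icc 1 i, (a j : ℝ)), (i : ℝ))}) :=
    subset_convexHull ℝ _ (Set.mem_union_left _ (Set.mem_insert _ _))
  have gH : (((h+r:ℕ):ℝ), (m:ℝ)) ∈ convexHull ℝ
      (({((0:ℝ), (0:ℝ)), (((h+r:ℕ):ℝ), (m:ℝ)), (((h+r:ℕ):ℝ) - (m:ℝ), (0:ℝ))} : Set (ℝ×ℝ)) ∪
        {p : ℝ × ℝ | ∃ i ∈ Finset.Icc 1 m, p = ((∑ j ∈ Finset.Icc 1 i, (a j : ℝ)), (i : ℝ))}) :=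
    subset_convexHull ℝ _ (Set.mem_union_left _ (Set.mem_insert_iff.mpr (Or.inr (Set.mem_insert _ _))))
  have gC : (((h+r:ℕ):ℝ) - (m:ℝ), (0:ℝ)) ∈ convexHull ℝ
      (({((0:ℝ), (0:ℝ)), (((h+r:ℕ):ℝ), (m:ℝ)), (((h+r:ℕ):ℝ) - (m:ℝ), (0:ℝ))} : Set (ℝ×ℝ)) ∪
        {p : ℝ × ℝ | ∃ i ∈ Finset.Icc 1 m, p = ((∑ j ∈ Finset.Icc 1 i, (a j : ℝ)), (i : ℝ))}) :=
    subset_convexHull ℝ _ (Set.mem_union_left _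
      (Set.mem_insert_iff.mpr (Or.inr (Set.mem_insert_iff.mpr (Or.inr rfl)))))
  have gS : ∀ i, i ∈ Finset.Icc 1 m → ((∑ j ∈ Finset.Icc 1 i, (a j : ℝ)), (i : ℝ)) ∈ convexHull ℝ
      (({((0:ℝ), (0:ℝ)), (((h+r:ℕ):ℝ), (m:ℝ)), (((h+r:ℕ):ℝ) - (m:ℝ), (0:ℝ))} : Set (ℝ×ℝ)) ∪
        {p : ℝ × ℝ | ∃ i ∈ Finset.Icc 1 m, p = ((∑ j ∈ Finset.Icc 1 i, (a j : ℝ)), (i : ℝ))}) :=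
    fun i hi => subset_convexHull ℝ _ (Set.mem_union_right _ ⟨i, hi, rfl⟩)
  apply Set.Subset.antisymm
  · apply convexHull_min _ (convex_convexHull ℝ _)
    rintro q ⟨u, hu, v, hv, rfl⟩
    rcases hv with rfl | rfl <;>
      rcases hu with ((rfl | rfl | rfl) | ⟨i, hi, rfl⟩)
    -- v = (0,0)
    · simpa using g0
    · -- (h,m)+(0,0) : between (s_m, m) and (h+r, m)
      have hA := gS m (Finset.mem_Icc.mpr ⟨hm, le_rfl⟩)
      have := mem_hull_of_between (x := (h:ℝ)) hA gH hsm (by push_cast; linarith)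
      simpa using this
    · -- (h-m, 0) + (0,0): between (0,0) and (h+r-m,0)
      have := mem_hull_of_between (x := (h:ℝ) - (m:ℝ)) g0 gC (by linarith)
        (by push_cast; linarith)
      simpa using this
    · simpa using gS i hi
    -- v = (r,0)
    · -- (r, 0): between (0,0) and (h+r-m,0)
      have := mem_hull_of_between (x := (r:ℝ)) g0 gC hr0 (by push_cast; linarith)
      simpa using this
    · -- (h+r, m)
      convert gH using 2 <;> simp [Prod.fst_add, Prod.snd_add] <;> push_cast <;> ring
    · -- (h+r-m, 0)
      convert gC using 2 <;> simp [Prod.fst_add, Prod.snd_add] <;> push_cast <;> ring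
    · -- (s_i + r, i)
      rw [Finset.mem_Icc] at hi
      have him : (i:ℝ) ≤ m := by exact_mod_cast hi.2
      have hi1 : (1:ℝ) ≤ (i:ℝ) := by exact_mod_cast hi.1
      set t : ℝ := (i:ℝ)/(m:ℝ) with ht
      have h0t : 0 ≤ t := by positivity
      have h1t : t ≤ 1 := by rw [ht, div_le_one hm0]; exact him
      have hQ := mem_hull_comb gC gH h0t h1t
      have hQeq : (1-t) • (((h+r:ℕ):ℝ) - (m:ℝ), (0:ℝ)) + t • (((h+r:ℕ):ℝ), (m:ℝ)) =
          (((h:ℝ) + (r:ℝ) - (m:ℝ) + (i:ℝ)), (i:ℝ)) := by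
        have htm : t * (m:ℝ) = (i:ℝ) := by rw [ht]; field_simp
        ext
        · simp only [Prod.smul_fst, Prod.fst_add, smul_eq_mul]
          push_cast
          nlinarith [htm]
        · simp only [Prod.smul_snd, Prod.snd_add, smul_eq_mul]
          simpa using htm
      rw [hQeq] at hQ
      -- bound : s_i + r ≤ h + r - m + i
      have hnat : (∑ j ∈ Finset.Icc 1 i, a j) + m ≤ (∑ j ∈ Finset.Icc 1 m, a j) + i := by
        have h2 := sum_split_nat a hi.2
        have h3 := sum_Ioc_ge ha1 hi.1 hi.2
        omega
      have hreal : (∑ j ∈ Finset.Icc 1 i, (a j:ℝ)) + (m:ℝ) ≤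
          (∑ j ∈ Finset.Icc 1 m, (a j:ℝ)) + (i:ℝ) := by
        have : ((∑ j ∈ Finset.Icc 1 i, a j) + m : ℕ) ≤
            ((∑ j ∈ Finset.Icc 1 m, a j) + i : ℕ) := hnat
        exact_mod_cast this
      have hA := gS i (Finset.mem_Icc.mpr hi)
      have := mem_hull_of_between (x := (∑ j ∈ Finset.Icc 1 i, (a j:ℝ)) + (r:ℝ)) hA hQ
        (by linarith) (by linarith)
      simpa using this
  · apply convexHull_min _ (convex_convexHull ℝ _)
    have seg0 : ((0:ℝ),(0:ℝ)) ∈ ({((0:ℝ),(0:ℝ)), ((r:ℝ),0)} : Set (ℝ×ℝ)) := Set.mem_insert _ _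
    have segr : ((r:ℝ),(0:ℝ)) ∈ ({((0:ℝ),(0:ℝ)), ((r:ℝ),0)} : Set (ℝ×ℝ)) :=
      Set.mem_insert_iff.mpr (Or.inr rfl)
    rintro q ((rfl | rfl | rfl) | ⟨i, hi, rfl⟩) <;> apply subset_convexHull
    · exact Set.mem_add.mpr ⟨((0:ℝ),(0:ℝ)), Set.mem_union_left _ (Set.mem_insert _ _),
        ((0:ℝ),(0:ℝ)), seg0, by simp⟩
    · exact Set.mem_add.mpr ⟨(((h:ℕ):ℝ),(m:ℝ)),
        Set.mem_union_left _ (Set.mem_insert_iff.mpr (Or.inr (Set.mem_insert _ _))),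
        ((r:ℝ),(0:ℝ)), segr, by push_cast; ext <;> simp⟩
    · exact Set.mem_add.mpr ⟨(((h:ℕ):ℝ) - (m:ℝ),(0:ℝ)),
        Set.mem_union_left _ (Set.mem_insert_iff.mpr (Or.inr (Set.mem_insert_iff.mpr (Or.inr rfl)))),
        ((r:ℝ),(0:ℝ)), segr, by push_cast; ext <;> simp <;> ring⟩
    · exact Set.mem_add.mpr ⟨_, Set.mem_union_right _ ⟨i, hi, rfl⟩,
        ((0:ℝ),(0:ℝ)), seg0, by simp⟩

end CpolyAdd

section Topology

lemma seg_finite (r : ℕ) : ({((0:ℝ),(0:ℝ)), ((r:ℝ),0)} : Set (ℝ×ℝ)).Finite :=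
  (Set.finite_singleton _).insert _

lemma seg_nonempty (r : ℕ) :
    (convexHull ℝ ({((0:ℝ),(0:ℝ)), ((r:ℝ),0)} : Set (ℝ×ℝ))).Nonempty :=
  ⟨_, subset_convexHull ℝ _ (Set.mem_insert _ _)⟩

lemma seg_bounded (r : ℕ) :
    Bornology.IsBounded (convexHull ℝ ({((0:ℝ),(0:ℝ)), ((r:ℝ),0)} : Set (ℝ×ℝ))) :=
  ((seg_finite r).isCompact_convexHull ℝ).isBounded

lemma seg_zero_mem (r : ℕ) :
    ((0:ℝ),(0:ℝ)) ∈ convexHull ℝ ({((0:ℝ),(0:ℝ)), ((r:ℝ),0)} : Set (ℝ×ℝ)) :=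
  subset_convexHull ℝ _ (Set.mem_insert _ _)

lemma seg_r_mem (r : ℕ) :
    ((r:ℝ),(0:ℝ)) ∈ convexHull ℝ ({((0:ℝ),(0:ℝ)), ((r:ℝ),0)} : Set (ℝ×ℝ)) :=
  subset_convexHull ℝ _ (Set.mem_insert_iff.mpr (Or.inr rfl))

lemma mem_seg_bounds {r : ℕ} {q : ℝ×ℝ}
    (hq : q ∈ convexHull ℝ ({((0:ℝ),(0:ℝ)), ((r:ℝ),0)} : Set (ℝ×ℝ))) :
    q.2 = 0 ∧ 0 ≤ q.1 ∧ q.1 ≤ r := by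
  rw [convexHull_pair] at hq
  obtain ⟨u, v, hu, hv, huv, rfl⟩ := hq
  constructor
  · simp [Prod.snd_add, Prod.smul_snd]
  · constructor
    · simp only [Prod.fst_add, Prod.smul_fst, smul_eq_mul]
      positivity
    · simp only [Prod.fst_add, Prod.smul_fst, smul_eq_mul]
      have hr0 : (0:ℝ) ≤ r := by positivity
      nlinarith

lemma Cpolygon_isClosed (m : ℕ) (a : ℕ → ℕ) (h : ℕ) : IsClosed (Cpolygon m a h) := by
  have hfin : (({((0:ℝ), (0:ℝ)), ((h:ℝ), (m:ℝ)), ((h:ℝ) - (m:ℝ), (0:ℝ))} : Set (ℝ×ℝ)) ∪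
      {p : ℝ × ℝ | ∃ i ∈ Finset.Icc 1 m, p = ((∑ j ∈ Finset.Icc 1 i, (a j : ℝ)), (i : ℝ))}).Finite := by
    apply Set.Finite.union
    · exact ((Set.finite_singleton _).insert _).insert _
    · have : {p : ℝ × ℝ | ∃ i ∈ Finset.Icc 1 m, p = ((∑ j ∈ Finset.Icc 1 i, (a j : ℝ)), (i : ℝ))} =
          (fun i : ℕ => ((∑ j ∈ Finset.Icc 1 i, (a j : ℝ)), (i : ℝ))) '' ↑(Finset.Icc 1 m) := by
        ext p
        simp only [Set.mem_setOf_eq, Set.mem_image, Finset.coe_Icc, Set.mem_Icc]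
        constructor
        · rintro ⟨i, hi, rfl⟩; exact ⟨i, by simpa using Finset.mem_Icc.mp hi, rfl⟩
        · rintro ⟨i, hi, rfl⟩; exact ⟨i, Finset.mem_Icc.mpr (by simpa using hi), rfl⟩
      rw [this]
      exact (Finset.Icc 1 m).finite_toSet.image _
  exact (hfin.isCompact_convexHull ℝ).isClosed

lemma NTP_base_finite (N : Polynomial (Polynomial ℤ)) :
    {p : ℝ × ℝ | ∃ i k : ℕ, (N.coeff k).coeff i ≠ 0 ∧ p = ((i:ℝ),(k:ℝ))}.Finite := by
  have hsub : {p : ℝ × ℝ | ∃ i k : ℕ, (N.coeff k).coeff i ≠ 0 ∧ p = ((i:ℝ),(k:ℝ))} ⊆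
      ⋃ k ∈ (↑N.support : Set ℕ), (fun i : ℕ => ((i:ℝ),(k:ℝ))) '' ↑(N.coeff k).support := by
    rintro p ⟨i, k, hne, rfl⟩
    apply Set.mem_biUnion
    · rw [Finset.mem_coe, Polynomial.mem_support_iff]
      intro hc; rw [hc] at hne; simp at hne
    · exact ⟨i, by rwa [Finset.mem_coe, Polynomial.mem_support_iff], rfl⟩
  exact (Set.Finite.biUnion N.support.finite_toSet
    (fun k _ => ((N.coeff k).support.finite_toSet.image _))).subset hsub

lemma NTP_isClosed (N : Polynomial (Polynomial ℤ)) : IsClosed (NTP N) :=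
  ((NTP_base_finite N).isCompact_convexHull ℝ).isClosed

end Topology

section PosetAux

lemma one_le_mcUp (m : ℕ) (P : PartialOrder (Fin m)) (x : Fin m) : 1 ≤ mcUp m P x := by
  rw [mcUp]
  apply le_csSup
  · refine ⟨m, ?_⟩
    rintro k ⟨s, rfl, _, _, _⟩
    calc s.card ≤ (Finset.univ : Finset (Fin m)).card := Finset.card_le_univ s
      _ = m := by simp
  · refine ⟨{x}, by simp, ?_, by simp, ?_⟩
    · simp only [Finset.coe_singleton]
      intro y hy z hz hne
      rw [Set.mem_singleton_iff] at hy hz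
      subst hy; subst hz; exact absurd rfl hne
    · intro y hy
      rw [Finset.mem_singleton] at hy
      rw [hy]

lemma qFact_coeff_zero (m : ℕ) : (qFact m).coeff 0 = 1 := by
  rw [qFact, Polynomial.coeff_zero_eq_eval_zero, Polynomial.eval_prod]
  apply Finset.prod_eq_one
  intro i hi
  rw [Finset.mem_Icc] at hi
  rw [qIntP, Polynomial.eval_finset_sum]
  have step : ∀ j ∈ Finset.range i, ((Polynomial.X : Polynomial ℤ) ^ j).eval 0 =
      if j = 0 then 1 else 0 := by
    intro j _
    rcases Nat.eq_zero_or_pos j with rfl | hj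
    · simp
    · simp [zero_pow (by omega : j ≠ 0), if_neg (by omega : ¬ j = 0)]
  rw [Finset.sum_congr rfl step, Finset.sum_ite_eq' (Finset.range i) 0 (fun _ => (1:ℤ))]
  simp [Finset.mem_range, hi.1]
  omega

end PosetAux

theorem statement4 (m : ℕ) (hm : 1 ≤ m) (P : PartialOrder (Fin m))
    (hnatdual : NatLabeled m (dualP m P))
    (a : ℕ → ℕ)
    (hamono : ∀ i ∈ Finset.Icc 1 m, ∀ j ∈ Finset.Icc 1 m, i ≤ j → a i ≤ a j)
    (haperm : (Finset.Icc 1 m).val.map a =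
      (Finset.univ : Finset (Fin m)).val.map (mcUp m P))
    (E : Polynomial (RatFunc ℚ))
    (hE : ∀ n : ℕ, E.eval (toRF (qIntP n)) = toRF (Wpoly m P n))
    (N : Polynomial (Polynomial ℤ)) (D : Polynomial ℤ) (hD : D ≠ 0)
    (hlead : 0 < N.leadingCoeff.leadingCoeff)
    (hND : N.map toRF = Polynomial.C (toRF D) * E)
    (hgcd : IsRelPrime N (Polynomial.C D))
    (φ : Polynomial ℤ)
    (hφ : Fpoly m (dualP m P) =
      N.map (Polynomial.toLaurent) * Polynomial.C (Polynomial.toLaurent φ))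
    (r : ℕ) (hr : r = φ.natDegree) :
    ((∃ h : ℕ, (∑ i ∈ Finset.Icc 1 m, a i) ≤ h ∧ NTP N = Cpolygon m a h) ↔
      (∃ h' : ℕ, (∑ i ∈ Finset.Icc 1 m, a i) ≤ h' ∧
        NTL (Fpoly m (dualP m P)) = Cpolygon m a h')) ∧
    (∀ h h' : ℕ, (∑ i ∈ Finset.Icc 1 m, a i) ≤ h → NTP N = Cpolygon m a h →
      (∑ i ∈ Finset.Icc 1 m, a i) ≤ h' → NTL (Fpoly m (dualP m P)) = Cpolygon m a h' →
      h' = h + r) := by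
  classical
  have ha1 : ∀ j ∈ Finset.Icc 1 m, 1 ≤ a j := by
    intro j hj
    have hmem : a j ∈ Multiset.map a (Finset.Icc 1 m).val :=
      Multiset.mem_map_of_mem a (by simpa using hj)
    rw [haperm] at hmem
    obtain ⟨x, _, he⟩ := Multiset.mem_map.mp hmem
    rw [← he]
    exact one_le_mcUp m P x
  have hNne : N ≠ 0 := by
    intro hc
    rw [hc] at hlead
    simp at hlead
  have hker : N.coeff 0 * φ = qFact m := by
    apply Polynomial.toLaurent_injective
    rw [← coeff_map_mul_C N φ 0, ← hφ]
    exact Fpoly_coeff_zero hnatdual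
  have hφ0 : φ.coeff 0 ≠ 0 := by
    intro hc
    have h1 := congrArg (fun p => Polynomial.coeff p 0) hker
    simp only [Polynomial.mul_coeff_zero, hc, mul_zero, qFact_coeff_zero] at h1
    exact absurd h1 (by norm_num)
  have hmain : NTL (Fpoly m (dualP m P)) =
      NTP N + convexHull ℝ {((0:ℝ),(0:ℝ)), ((r : ℝ), 0)} := by
    rw [hφ, hr]
    exact NTL_eq_NTP_add_seg hNne hφ0
  set s := ∑ i ∈ Finset.Icc 1 m, a i with hsdef
  have hscast : ∑ j ∈ Finset.Icc 1 m, (a j:ℝ) = (s:ℝ) := by rw [hsdef]; push_cast; rfl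
  have forward : ∀ h : ℕ, s ≤ h → NTP N = Cpolygon m a h →
      NTL (Fpoly m (dualP m P)) = Cpolygon m a (h + r) := by
    intro h hsh hNT
    rw [hmain, hNT, Cpolygon_add_seg hm r ha1 hsh]
  have topmem : ∀ h : ℕ, ((h:ℝ),(m:ℝ)) ∈ Cpolygon m a h := by
    intro h
    exact subset_convexHull ℝ _
      (Set.mem_union_left _ (Set.mem_insert_iff.mpr (Or.inr (Set.mem_insert _ _))))
  have smmem : ∀ h : ℕ, ((s:ℝ),(m:ℝ)) ∈ Cpolygon m a h := by
    intro h
    have : ((∑ j ∈ Finset.Icc 1 m, (a j:ℝ)),(m:ℝ)) ∈ Cpolygon m a h :=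
      subset_convexHull ℝ _
        (Set.mem_union_right _ ⟨m, Finset.mem_Icc.mpr ⟨hm, le_rfl⟩, rfl⟩)
    rwa [hscast] at this
  have uniq : ∀ h1 h2 : ℕ, s ≤ h1 → s ≤ h2 → Cpolygon m a h1 = Cpolygon m a h2 → h1 = h2 := by
    intro h1 h2 hs1 hs2 hCC
    have hs1' : (∑ j ∈ Finset.Icc 1 m, (a j:ℝ)) ≤ (h1:ℝ) := by
      rw [hscast]; exact_mod_cast hs1
    have hs2' : (∑ j ∈ Finset.Icc 1 m, (a j:ℝ)) ≤ (h2:ℝ) := by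
      rw [hscast]; exact_mod_cast hs2
    have hm0 : (0:ℝ) ≤ (m:ℝ) := by positivity
    have e1 : (h1:ℝ) ≤ (h2:ℝ) := by
      have hp := topmem h1
      rw [hCC] at hp
      have := Cpolygon_le hs2' _ hp
      simp only at this
      nlinarith
    have e2 : (h2:ℝ) ≤ (h1:ℝ) := by
      have hp := topmem h2
      rw [← hCC] at hp
      have := Cpolygon_le hs1' _ hp
      simp only at this
      nlinarith
    have : (h1:ℝ) = (h2:ℝ) := le_antisymm e1 e2
    exact_mod_cast this
  have converse : ∀ h' : ℕ, s ≤ h' → NTL (Fpoly m (dualP m P)) = Cpolygon m a h' →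
      s + r ≤ h' ∧ NTP N = Cpolygon m a (h' - r) := by
    intro h' hsh' hFT
    have hEq : NTP N + convexHull ℝ {((0:ℝ),(0:ℝ)), ((r : ℝ), 0)} = Cpolygon m a h' := by
      rw [← hmain]; exact hFT
    have hs' : (∑ j ∈ Finset.Icc 1 m, (a j:ℝ)) ≤ (h':ℝ) := by
      rw [hscast]; exact_mod_cast hsh'
    obtain ⟨u, hu, v, hv, huv⟩ := (by rw [hEq]; exact smmem h' :
      ((s:ℝ),(m:ℝ)) ∈ NTP N + convexHull ℝ {((0:ℝ),(0:ℝ)), ((r : ℝ), 0)})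
    obtain ⟨hv2, hv0, hvr⟩ := mem_seg_bounds hv
    have hu2 : u.2 = (m:ℝ) := by
      have := congrArg Prod.snd huv
      simp only [Prod.snd_add, hv2, add_zero] at this
      exact this
    have hu1 : u.1 = (s:ℝ) - v.1 := by
      have := congrArg Prod.fst huv
      simp only [Prod.fst_add] at this
      linarith
    have huC : u ∈ Cpolygon m a h' := by
      rw [← hEq]
      exact Set.mem_add.mpr ⟨u, hu, ((0:ℝ),(0:ℝ)), seg_zero_mem r, by simp⟩
    have hge := Cpolygon_ge hm ha1 hamono hsh' u huC
    rw [hu2, hu1, hscast] at hge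
    have hv1 : v.1 = 0 := le_antisymm (by linarith) hv0
    have hu1' : u.1 = (s:ℝ) := by rw [hu1, hv1]; ring
    have hsr : ((s:ℝ) + (r:ℝ), (m:ℝ)) ∈ Cpolygon m a h' := by
      rw [← hEq]
      refine Set.mem_add.mpr ⟨u, hu, ((r:ℝ),(0:ℝ)), seg_r_mem r, ?_⟩
      refine Prod.ext_iff.mpr ⟨?_, ?_⟩
      · simp only [Prod.fst_add]; rw [hu1']
      · simp only [Prod.snd_add]; rw [hu2]; ring
    have hle := Cpolygon_le hs' _ hsr
    simp only at hle
    have hm0 : (0:ℝ) ≤ (m:ℝ) := by positivity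
    have hsrreal : (s:ℝ) + (r:ℝ) ≤ (h':ℝ) := by nlinarith
    have hsrnat : s + r ≤ h' := by exact_mod_cast hsrreal
    refine ⟨hsrnat, ?_⟩
    have hCsum : Cpolygon m a (h' - r) + convexHull ℝ {((0:ℝ),(0:ℝ)), ((r : ℝ), 0)} =
        Cpolygon m a h' := by
      have := Cpolygon_add_seg hm r ha1 (show s ≤ h' - r by omega)
      rwa [show h' - r + r = h' by omega] at this
    refine radstrom_cancel ?_ (NTP_isClosed N) ?_ (Cpolygon_isClosed m a (h'-r))
      (seg_nonempty r) (seg_bounded r) (hEq.trans hCsum.symm)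
    · exact convex_convexHull ℝ _
    · exact convex_convexHull ℝ _
  constructor
  · constructor
    · rintro ⟨h, hsh, hNT⟩
      exact ⟨h + r, by omega, forward h hsh hNT⟩
    · rintro ⟨h', hsh', hFT⟩
      obtain ⟨hsr, hNT⟩ := converse h' hsh' hFT
      exact ⟨h' - r, by omega, hNT⟩
  · intro h h' hsh hNT hsh' hFT
    have h1 := forward h hsh hNT
    have h2 : Cpolygon m a h' = Cpolygon m a (h+r) := by rw [← hFT, h1]
    have := uniq h' (h+r) hsh' (by omega) h2
    omega
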